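/- Let c: ℝⁿ → ℝ have L-Lipschitz continuous gradient on a convex set B, and let x ∈ B with ∇c(x) ≠ 0. For the ℓ2 restoration move z = x − α c(x) ∇c(x)/‖∇c(x)‖₂², if z ∈ B then |c(z) − (1 − α) c(x)| ≤ (L/2) α² c(x)² / ‖∇c(x)‖₂². -/

import Mathlib

open RealInnerProductSpace

open Set in
private lemma descent_lemma {E : Type*} [NormedAddCommGroup E] [InnerProductSpace ℝ E] [CompleteSpace E]
    {B : Set E} (hB : Convex ℝ B) {c : E → ℝ} {g : E → E}
    (hgrad : ∀ x ∈ B, HasGradientAt c (g x) x)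
    {L : ℝ}
    (hlip : ∀ x ∈ B, ∀ y ∈ B, ‖g y - g x‖ ≤ L * ‖y - x‖)
    {x z : E} (hx : x ∈ B) (hzB : z ∈ B) :
    |c z - c x - ⟪g x, z - x⟫| ≤ L / 2 * ‖z - x‖ ^ 2 := by
  set v := z - x with hv
  have hmem : ∀ t ∈ Icc (0:ℝ) 1, x + t • v ∈ B := by
    intro t ht
    have := hB hx hzB (by linarith [ht.2] : (0:ℝ) ≤ 1 - t) ht.1 (by ring)
    convert this using 1
    simp [hv]
    module
  set f : ℝ → ℝ := fun t => c (x + t • v) - c x - t * ⟪g x, v⟫ with hf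
  set f' : ℝ → ℝ := fun t => ⟪g (x + t • v) - g x, v⟫ with hf'
  have hderiv : ∀ t ∈ Icc (0:ℝ) 1, HasDerivAt f (f' t) t := by
    intro t ht
    have hpath : HasDerivAt (fun s : ℝ => x + s • v) v t := by
      simpa using ((hasDerivAt_id t).smul_const v).const_add x
    have hc : HasFDerivAt c (InnerProductSpace.toDual ℝ E (g (x + t • v))) (x + t • v) :=
      (hgrad _ (hmem t ht))
    have h1 : HasDerivAt (fun s : ℝ => c (x + s • v)) (⟪g (x + t • v), v⟫) t := by
      simpa [Function.comp_def] using hc.comp_hasDerivAt t hpath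
    have h2 : HasDerivAt (fun s : ℝ => s * ⟪g x, v⟫) (⟪g x, v⟫) t := by
      simpa using (hasDerivAt_id t).mul_const (⟪g x, v⟫)
    have := (h1.sub_const (c x)).sub h2
    simpa [hf, hf', inner_sub_left, Pi.sub_def] using this
  have hcont : ContinuousOn f (Icc (0:ℝ) 1) := fun t ht =>
    (hderiv t ht).continuousAt.continuousWithinAt
  have hbound : ∀ t ∈ Ico (0:ℝ) 1, ‖f' t‖ ≤ (L * ‖v‖ ^ 2) * t := by
    intro t ht
    have ht' : t ∈ Icc (0:ℝ) 1 := ⟨ht.1, ht.2.le⟩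
    have h1 : |f' t| ≤ ‖g (x + t • v) - g x‖ * ‖v‖ := by
      simpa [hf'] using abs_real_inner_le_norm (g (x + t • v) - g x) v
    have h2 : ‖g (x + t • v) - g x‖ ≤ L * ‖x + t • v - x‖ := hlip x hx _ (hmem t ht')
    have h3 : ‖x + t • v - x‖ = t * ‖v‖ := by
      simp [norm_smul, abs_of_nonneg ht.1]
    calc ‖f' t‖ ≤ ‖g (x + t • v) - g x‖ * ‖v‖ := h1
      _ ≤ (L * (t * ‖v‖)) * ‖v‖ := by
          apply mul_le_mul_of_nonneg_right _ (norm_nonneg v); rw [← h3]; exact h2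
      _ = (L * ‖v‖ ^ 2) * t := by ring
  set Bnd : ℝ → ℝ := fun t => L / 2 * ‖v‖ ^ 2 * t ^ 2 with hBnd
  have hB' : ∀ t, HasDerivAt Bnd ((L * ‖v‖ ^ 2) * t) t := by
    intro t
    have := ((hasDerivAt_pow 2 t).const_mul (L / 2 * ‖v‖ ^ 2))
    simpa [hBnd] using this.congr_deriv (by ring)
  have key := image_norm_le_of_norm_deriv_right_le_deriv_boundary hcont
    (fun t ht => (hderiv t ⟨ht.1, ht.2.le⟩).hasDerivWithinAt)
    (by simp [hf, hBnd]) hB' hbound (right_mem_Icc.2 zero_le_one)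
  have : f 1 = c z - c x - ⟪g x, z - x⟫ := by simp [hf, hv]
  rw [← this]
  simpa [hBnd] using key

/-- Accuracy of one ℓ2 restoration move under `L`-Lipschitz gradient: for
`z = x − (α c(x)/‖∇c(x)‖²) ∇c(x)`, if `z ∈ B` then
`|c(z) − (1 − α) c(x)| ≤ (L/2) α² c(x)² / ‖∇c(x)‖²`. -/
theorem stmt15 (n : ℕ) (B : Set (EuclideanSpace ℝ (Fin n))) (hB : Convex ℝ B)
    (c : EuclideanSpace ℝ (Fin n) → ℝ)
    (g : EuclideanSpace ℝ (Fin n) → EuclideanSpace ℝ (Fin n))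
    (hgrad : ∀ x ∈ B, HasGradientAt c (g x) x)
    (L : ℝ) (hL : 0 ≤ L)
    (hlip : ∀ x ∈ B, ∀ y ∈ B, ‖g y - g x‖ ≤ L * ‖y - x‖)
    (x : EuclideanSpace ℝ (Fin n)) (hx : x ∈ B) (hgx : g x ≠ 0)
    (α : ℝ) (hα0 : 0 ≤ α) (hα1 : α ≤ 1)
    (z : EuclideanSpace ℝ (Fin n))
    (hz : z = x - (α * c x / ‖g x‖ ^ 2) • g x)
    (hzB : z ∈ B) :
    |c z - (1 - α) * c x| ≤ L / 2 * α ^ 2 * (c x) ^ 2 / ‖g x‖ ^ 2 := by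
  have hg2 : (0:ℝ) < ‖g x‖ ^ 2 := pow_pos (norm_pos_iff.2 hgx) 2
  have hzx : z - x = -(α * c x / ‖g x‖ ^ 2) • g x := by rw [hz]; module
  have hinner : ⟪g x, z - x⟫ = -(α * c x) := by
    rw [hzx, real_inner_smul_right, real_inner_self_eq_norm_sq]
    field_simp
  have hnorm : ‖z - x‖ ^ 2 = α ^ 2 * (c x) ^ 2 / ‖g x‖ ^ 2 := by
    rw [hzx, norm_smul]
    rw [mul_pow, Real.norm_eq_abs, sq_abs]
    field_simp
  have key := descent_lemma hB hgrad hlip hx hzB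
  rw [hinner, hnorm] at key
  have he : c z - c x - -(α * c x) = c z - (1 - α) * c x := by ring
  rw [he] at key
  calc |c z - (1 - α) * c x| ≤ L / 2 * (α ^ 2 * c x ^ 2 / ‖g x‖ ^ 2) := key
    _ = L / 2 * α ^ 2 * (c x) ^ 2 / ‖g x‖ ^ 2 := by ring
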